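/- The polynomial p_n (defined by p_0 = 1, p_1(x) = x − 2, p_{n+2} = x p_{n+1} − 2 p_n) equals the characteristic polynomial of the n×n tridiagonal matrix τ(n) with diagonal (2, 0, …, 0), superdiagonal all 1's, and subdiagonal all 2's. -/
import Mathlib


open Polynomial Matrix

/-- The polynomials `p₀ = 1`, `p₁ = x - 2`, `p_{n+2} = x p_{n+1} - 2 p_n`. -/
noncomputable def pSeq : ℕ → Polynomial ℝ
  | 0 => 1
  | 1 => Polynomial.X - 2
  | n + 2 => Polynomial.X * pSeq (n + 1) - 2 * pSeq n

/-- The `n × n` tridiagonal matrix with diagonal `(2,0,…,0)`,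
superdiagonal all `1`'s and subdiagonal all `2`'s. -/
def tau (n : ℕ) : Matrix (Fin n) (Fin n) ℝ :=
  fun i j =>
    if i = j then (if i.val = 0 then 2 else 0)
    else if i.val + 1 = j.val then 1
    else if j.val + 1 = i.val then 2
    else 0

lemma tau_apply (n : ℕ) (i j : Fin n) :
    tau n i j = if (i : ℕ) = (j : ℕ) then (if (i : ℕ) = 0 then 2 else 0)
      else if (i : ℕ) + 1 = (j : ℕ) then 1
      else if (j : ℕ) + 1 = (i : ℕ) then 2
      else 0 := by
  simp [tau, Fin.ext_iff]

lemma tau_castSucc (n : ℕ) (i j : Fin n) :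
    tau (n+1) i.castSucc j.castSucc = tau n i j := by
  rw [tau_apply, tau_apply]
  simp

lemma charm_sub (n : ℕ) :
    (charmatrix (tau (n+1))).submatrix Fin.castSucc Fin.castSucc = charmatrix (tau n) := by
  ext i j
  simp only [submatrix_apply, charmatrix_apply, tau_castSucc, Matrix.diagonal_apply,
    Fin.castSucc_inj]

lemma charm_ne' {m : ℕ} (M : Matrix (Fin m) (Fin m) ℝ) (i j : Fin m) (h : (i : ℕ) ≠ (j : ℕ)) :
    charmatrix M i j = -C (M i j) :=
  charmatrix_apply_ne M i j (fun hh => h (congrArg Fin.val hh))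

lemma charpoly_rec (n : ℕ) :
    (tau (n+2)).charpoly = X * (tau (n+1)).charpoly - 2 * (tau n).charpoly := by
  have hA := rfl (a := charmatrix (tau (n+2)))
  set A := charmatrix (tau (n+2)) with hA
  have hsub1 : A.submatrix Fin.castSucc Fin.castSucc = charmatrix (tau (n+1)) := charm_sub (n+1)
  set B := A.submatrix Fin.castSucc ((Fin.castSucc (Fin.last n)).succAbove) with hB
  have hcol : (Fin.castSucc (Fin.last n)).succAbove (Fin.last n) = Fin.last (n+1) := by
    rw [Fin.succAbove_of_le_castSucc _ _ le_rfl]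
    rfl
  have hcol2 : ∀ l : Fin n, (Fin.castSucc (Fin.last n)).succAbove l.castSucc
      = l.castSucc.castSucc := by
    intro l
    rw [Fin.succAbove_of_castSucc_lt]
    rw [Fin.castSucc_lt_castSucc_iff]
    exact Fin.castSucc_lt_last l
  have hBdet : B.det = - (tau n).charpoly := by
    rw [Matrix.det_succ_column B (Fin.last n), Fin.sum_univ_castSucc]
    have hz : ∀ k : Fin n,
        (-1) ^ ((k.castSucc : ℕ) + (Fin.last n : ℕ)) * B k.castSucc (Fin.last n) *
          (B.submatrix k.castSucc.succAbove (Fin.last n).succAbove).det = 0 := by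
      intro k
      have hk := k.isLt
      have h0 : B k.castSucc (Fin.last n) = 0 := by
        rw [hB, submatrix_apply, hcol, hA, charm_ne', tau_apply]
        · simp only [Fin.coe_castSucc, Fin.val_last]
          rw [if_neg (by omega), if_neg (by omega), if_neg (by omega)]
          simp
        · simp only [Fin.coe_castSucc, Fin.val_last]; omega
      rw [h0]; ring
    rw [Finset.sum_eq_zero (fun k _ => hz k), zero_add]
    have hBC : B.submatrix Fin.castSucc Fin.castSucc = charmatrix (tau n) := by
      rw [hB, submatrix_submatrix]
      have hfun : ((Fin.castSucc (Fin.last n)).succAbove ∘ Fin.castSucc : Fin n → Fin (n+2))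
          = Fin.castSucc ∘ Fin.castSucc := funext fun l => hcol2 l
      rw [hfun, ← submatrix_submatrix, hsub1, charm_sub]
    have hent : B (Fin.last n) (Fin.last n) = -1 := by
      rw [hB, submatrix_apply, hcol, hA, charm_ne', tau_apply]
      · simp only [Fin.coe_castSucc, Fin.val_last]
        norm_num
      · simp
    rw [hent, show (Fin.last n).succAbove = Fin.castSucc from Fin.succAbove_last, hBC]
    simp only [Fin.val_last, Matrix.charpoly]
    rw [← two_mul, pow_mul]
    norm_num
  -- main expansion along the last row
  rw [Matrix.charpoly, Matrix.det_succ_row A (Fin.last (n+1)), Fin.sum_univ_castSucc,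
    Fin.sum_univ_castSucc]
  have hz : ∀ j : Fin n,
      (-1) ^ ((Fin.last (n+1) : ℕ) + (j.castSucc.castSucc : ℕ)) *
        A (Fin.last (n+1)) j.castSucc.castSucc *
        (A.submatrix (Fin.last (n+1)).succAbove j.castSucc.castSucc.succAbove).det = 0 := by
    intro j
    have hj := j.isLt
    have h0 : A (Fin.last (n+1)) j.castSucc.castSucc = 0 := by
      rw [hA, charm_ne', tau_apply]
      · simp only [Fin.coe_castSucc, Fin.val_last]
        rw [if_neg (by omega), if_neg (by omega), if_neg (by omega)]
        simp
      · simp only [Fin.coe_castSucc, Fin.val_last]; omega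
    rw [h0]; ring
  rw [Finset.sum_eq_zero (fun j _ => hz j), zero_add]
  have hlast : A (Fin.last (n+1)) (Fin.last (n+1)) = X := by
    rw [hA, charmatrix_apply_eq, tau_apply]
    simp only [Fin.val_last]
    norm_num
  have hpen : A (Fin.last (n+1)) (Fin.last n).castSucc = -2 := by
    rw [hA, charm_ne', tau_apply]
    · simp only [Fin.coe_castSucc, Fin.val_last]
      rw [if_neg (by omega), if_neg (by omega)]
      simp [map_ofNat]
    · simp
  rw [hlast, hpen]
  rw [show (Fin.last (n+1)).succAbove = Fin.castSucc from Fin.succAbove_last]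
  have hBeq : A.submatrix Fin.castSucc (Fin.last n).castSucc.succAbove = B := rfl
  rw [hBeq, hBdet, hsub1]
  simp only [Fin.val_last, Fin.coe_castSucc]
  have e1 : (-1 : ℝ[X]) ^ (n + 1 + n) = -1 := by
    rw [show n + 1 + n = 2 * n + 1 by ring, pow_succ, pow_mul]
    norm_num
  have e2 : (-1 : ℝ[X]) ^ (n + 1 + (n + 1)) = 1 := by
    rw [show n + 1 + (n + 1) = 2 * (n + 1) by ring, pow_mul]
    norm_num
  rw [e1, e2]
  simp only [Matrix.charpoly]
  ring

theorem pSeq_eq_charpoly_tau (n : ℕ) : (tau n).charpoly = pSeq n := by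
  induction n using Nat.twoStepInduction with
  | zero =>
    simp [Matrix.charpoly, pSeq, Matrix.det_fin_zero]
  | one =>
    rw [Matrix.charpoly, Matrix.det_fin_one, charmatrix_apply_eq]
    simp [tau, pSeq, map_ofNat]
  | more n ih1 ih2 =>
    rw [charpoly_rec, ih1, ih2]
    rfl
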